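/- Intervention preserves recursive causal models: if ⟨F, A⟩ is a recursive causal model and [X⃗:=x⃗] is any assignment, then the intervened pair ⟨F′, A′⟩ is again a recursive causal model, i.e., A′ complies with F′ and F′ is recursive. -/

import Mathlib

open Classical

/-- A finite signature: variables sorted into exogenous and endogenous, each with a
finite nonempty range of values. -/
structure Sig : Type 1 where
  Var : Type
  exo : Var → Prop
  Val : Var → Type
  [decEqVar : DecidableEq Var]
  [finVar : Fintype Var]
  [neVar : Nonempty Var]
  [decEqVal : ∀ X : Var, DecidableEq (Val X)]
  [finVal : ∀ X : Var, Fintype (Val X)]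
  [neVal : ∀ X : Var, Nonempty (Val X)]

attribute [instance] Sig.decEqVar Sig.finVar Sig.neVar Sig.decEqVal Sig.finVal Sig.neVal

variable {S : Sig}

/-- A valuation: a value for each variable. -/
abbrev Env (S : Sig) : Type := ∀ X : S.Var, S.Val X

instance : Nonempty (Env S) := ⟨fun X => Classical.arbitrary (S.Val X)⟩

/-- Values for all variables other than `V`. -/
abbrev Others (S : Sig) (V : S.Var) : Type := ∀ X : {X : S.Var // X ≠ V}, S.Val X.val

/-- The restriction of a valuation to the variables other than `V`. -/
def Env.restrict (A : Env S) (V : S.Var) : Others S V := fun X => A X.val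

/-- A family of structural functions (only the components at endogenous variables
are meaningful). -/
abbrev StructFuns (S : Sig) : Type := ∀ V : S.Var, Others S V → S.Val V

/-- A valuation complies with the structural functions: the value of each endogenous
variable is obtained by applying its structural function to the values of all
other variables. -/
def Complies (F : StructFuns S) (A : Env S) : Prop :=
  ∀ V : S.Var, ¬ S.exo V → A V = F V (A.restrict V)

/-- The endogenous variable `V` is directly causally affected by `X` under `F`. -/
def DirAff (F : StructFuns S) (X V : S.Var) : Prop :=
  ¬ S.exo V ∧ ∃ (h : X ≠ V) (g : Others S V) (x₁ x₂ : S.Val X),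
    x₁ ≠ x₂ ∧
      F V (Function.update g ⟨X, h⟩ x₁) ≠ F V (Function.update g ⟨X, h⟩ x₂)

/-- `F` is recursive: the transitive closure of the direct causal dependence
relation is asymmetric (transitivity is automatic for `Relation.TransGen`). -/
def RecursiveF (F : StructFuns S) : Prop :=
  ∀ a b : S.Var, Relation.TransGen (DirAff F) a b → ¬ Relation.TransGen (DirAff F) b a

/-- An assignment of values to a set of pairwise distinct variables. -/
abbrev Intervention (S : Sig) : Type := ∀ X : S.Var, Option (S.Val X)

/-- The empty assignment. -/
def iEmpty (S : Sig) : Intervention S := fun _ => none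

/-- Extend an assignment by additionally setting `Y` to `y` (overriding). -/
def iUpd (I : Intervention S) (Y : S.Var) (y : S.Val Y) : Intervention S :=
  Function.update I Y (some y)

/-- Combine assignments, the second overriding the first:  `[X⃗ := x⃗, Y⃗ := y⃗]`. -/
def icomp (I J : Intervention S) : Intervention S := fun W =>
  match J W with
  | some v => some v
  | none => I W

/-- The intervened family of structural functions: intervened variables get the
constant function returning the assigned value; the rest are unchanged. -/
def intF (F : StructFuns S) (I : Intervention S) : StructFuns S :=
  fun V g => (I V).getD (F V g)

/-- `A'` is the result of intervening with `I` on the valuation `A` (w.r.t. `F`):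
exogenous intervened variables get the assigned value, exogenous non-intervened
variables keep their value, and each endogenous variable complies with its new
structural function. -/
def IntervenedVal (F : StructFuns S) (A : Env S) (I : Intervention S) (A' : Env S) : Prop :=
  (∀ X : S.Var, S.exo X → ∀ v : S.Val X, I X = some v → A' X = v) ∧
  (∀ X : S.Var, S.exo X → I X = none → A' X = A X) ∧
  (∀ V : S.Var, ¬ S.exo V → A' V = intF F I V (A'.restrict V))

/-- The intervened valuation (unique when `F` is recursive). -/
noncomputable def intVal (F : StructFuns S) (A : Env S) (I : Intervention S) : Env S :=
  Classical.epsilon (IntervenedVal F A I)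

lemma dirAff_intF_le (F : StructFuns S) (I : Intervention S) :
    ∀ a b, DirAff (intF F I) a b → DirAff F a b := by
  rintro a b ⟨hb, h, g, x₁, x₂, hne, hdiff⟩
  refine ⟨hb, h, g, x₁, x₂, hne, ?_⟩
  cases hI : I b with
  | some v => exact absurd (by simp [intF, hI]) hdiff
  | none => simpa [intF, hI] using hdiff

lemma recursiveF_intF (F : StructFuns S) (I : Intervention S) (hRec : RecursiveF F) :
    RecursiveF (intF F I) := by
  intro a b hab hba
  exact hRec a b (Relation.TransGen.mono (dirAff_intF_le F I) a b hab) (Relation.TransGen.mono (dirAff_intF_le F I) b a hba)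

/-- If two contexts agree at all variables directly affecting `V`, the structural
function gives the same value. -/
lemma agree_of_eq_on_aff (F' : StructFuns S) (V : S.Var) (hV : ¬ S.exo V) :
    ∀ (n : ℕ) (g g' : Others S V),
      (∀ Y : {X : S.Var // X ≠ V}, DirAff F' Y.val V → g Y = g' Y) →
      (Finset.univ.filter (fun Y => g Y ≠ g' Y)).card ≤ n →
      F' V g = F' V g' := by
  intro n
  induction n with
  | zero =>
    intro g g' _ hcard
    have hall : ∀ Y, g Y = g' Y := by
      intro Y
      by_contra hne
      have hmem : Y ∈ Finset.univ.filter (fun Y => g Y ≠ g' Y) := by simp [hne]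
      have := Finset.card_pos.mpr ⟨Y, hmem⟩
      omega
    exact congrArg _ (funext hall)
  | succ n ih =>
    intro g g' hagree hcard
    by_cases hall : ∀ Y, g Y = g' Y
    · exact congrArg _ (funext hall)
    push_neg at hall
    obtain ⟨Y, hY⟩ := hall
    have hstep : F' V g = F' V (Function.update g Y (g' Y)) := by
      by_contra hd
      apply hY
      apply hagree
      exact ⟨hV, Y.prop, g, g Y, g' Y, hY, by
        simpa [Subtype.coe_eta, Function.update_eq_self] using hd⟩
    rw [hstep]
    refine ih (Function.update g Y (g' Y)) g' ?_ ?_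
    · intro Z hZ
      by_cases hZY : Z = Y
      · subst hZY; simp
      · rw [Function.update_of_ne hZY]; exact hagree Z hZ
    · have hsub : (Finset.univ.filter
          (fun Z => Function.update g Y (g' Y) Z ≠ g' Z)) ⊆
          (Finset.univ.filter (fun Z => g Z ≠ g' Z)).erase Y := by
        intro Z hZ
        simp only [Finset.mem_filter, Finset.mem_univ, true_and] at hZ
        have hZY : Z ≠ Y := by
          intro h; subst h; exact hZ (by simp)
        rw [Function.update_of_ne hZY] at hZ
        simp [Finset.mem_erase, hZY, hZ]
      have hmem : Y ∈ Finset.univ.filter (fun Z => g Z ≠ g' Z) := by simp [hY]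
      have := Finset.card_le_card hsub
      have := Finset.card_erase_of_mem hmem
      omega

lemma exists_intervenedVal (F : StructFuns S) (A : Env S) (I : Intervention S)
    (hRec : RecursiveF F) : ∃ A' : Env S, IntervenedVal F A I A' := by
  set F' := intF F I with hF'
  have hRec' : RecursiveF F' := recursiveF_intF F I hRec
  have hirr : ∀ a, ¬ Relation.TransGen (DirAff F') a a := fun a h => hRec' a a h h
  haveI : IsTrans S.Var (Relation.TransGen (DirAff F')) :=
    ⟨fun _ _ _ => Relation.TransGen.trans⟩
  haveI : IsIrrefl S.Var (Relation.TransGen (DirAff F')) := ⟨hirr⟩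
  have wf : WellFounded (fun a b => DirAff F' a b) :=
    Subrelation.wf (fun h => Relation.TransGen.single h)
      (Finite.wellFounded_of_trans_of_irrefl _)
  set step : (V : S.Var) → ((W : S.Var) → DirAff F' W V → S.Val W) → S.Val V :=
    fun V rec =>
      if _ : S.exo V then (I V).getD (A V)
      else F' V (fun Y =>
        if h : DirAff F' Y.val V then rec Y.val h else (I Y.val).getD (A Y.val))
    with hstep
  set sol : Env S := fun V => wf.fix step V with hsol
  have sol_eq : ∀ V, sol V = step V (fun W _ => sol W) := fun V => wf.fix_eq step V
  refine ⟨sol, ?_, ?_, ?_⟩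
  · intro X hX v hI
    rw [sol_eq, hstep]; simp [hX, hI]
  · intro X hX hI
    rw [sol_eq, hstep]; simp [hX, hI]
  · intro V hV
    rw [sol_eq, hstep]
    simp only [hV, dif_neg, not_false_iff]
    refine agree_of_eq_on_aff F' V hV (Fintype.card {X : S.Var // X ≠ V}) _ _ ?_
      (Finset.card_le_univ _)
    intro Y hY
    simp [hY, Env.restrict]

/-- Theorem: intervention preserves recursive causal models.  If `⟨F, A⟩` is a
recursive causal model and `I` is any assignment, then the intervened pair
`⟨intF F I, intVal F A I⟩` is again a recursive causal model: the intervened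
valuation complies with the intervened structural functions, and the intervened
structural functions are recursive. -/
theorem intervention_preserves_recursive_causal_models
    (S : Sig) (F : StructFuns S) (A : Env S) (I : Intervention S)
    (hComp : Complies F A) (hRec : RecursiveF F) :
    Complies (intF F I) (intVal F A I) ∧ RecursiveF (intF F I) := by
  have hex := exists_intervenedVal F A I hRec
  have hspec : IntervenedVal F A I (intVal F A I) :=
    Classical.epsilon_spec hex
  exact ⟨fun V hV => hspec.2.2 V hV, recursiveF_intF F I hRec⟩
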